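/- (Convergence of the smoother in the stiff limit.) Assume Q_Δ and A are invertible and (I_M − Q_Δ^{-1} Q)^M = 0 (as holds for the LU-trick preconditioner). Then for every integer k ≥ M there exist constants c > 0 (depending on k) and μ* > 0 such that for all μ > μ*, the preconditioner P̂(μ) is invertible and ρ( T_S(μ)^k ) ≤ c / μ. -/

import Mathlib

/-!
STATEMENT 11 (Convergence of the smoother in the stiff limit): Assume Q_Δ and A
are invertible and (I_M − Q_Δ⁻¹ Q)^M = 0. Then for every k ≥ M there exist c > 0
and μ* > 0 such that for all μ > μ*, P̂(μ) is invertible and ρ(T_S(μ)^k) ≤ c / μ.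
-/

noncomputable section

open Matrix
open scoped Kronecker

/-- Complexification of a real matrix. -/
def cmplx {m n : Type*} (A : Matrix m n ℝ) : Matrix m n ℂ := A.map (fun x => (x : ℂ))

/-- The matrix `E` with ones on the first subdiagonal and zeros elsewhere. -/
def Emat (L : ℕ) : Matrix (Fin L) (Fin L) ℂ :=
  Matrix.of fun i j => if (i : ℕ) = (j : ℕ) + 1 then 1 else 0

/-- The matrix `N_M` whose last column consists of ones, all other entries zero. -/
def Nmat (M : ℕ) : Matrix (Fin M) (Fin M) ℂ :=
  Matrix.of fun _ j => if (j : ℕ) = M - 1 then 1 else 0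

/-- `H = N_M ⊗ I_N`. -/
def Hmat (M N : ℕ) : Matrix (Fin M × Fin N) (Fin M × Fin N) ℂ :=
  Nmat M ⊗ₖ (1 : Matrix (Fin N) (Fin N) ℂ)

/-- `E ⊗ H`. -/
def EH (L M N : ℕ) : Matrix (Fin L × Fin M × Fin N) (Fin L × Fin M × Fin N) ℂ :=
  Emat L ⊗ₖ Hmat M N

/-- The composite collocation matrix `C(μ) = I − μ (I_L ⊗ Q ⊗ A) − E ⊗ H`. -/
def Cmat (L : ℕ) {M N : ℕ} (Q : Matrix (Fin M) (Fin M) ℝ) (A : Matrix (Fin N) (Fin N) ℂ)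
    (μ : ℝ) : Matrix (Fin L × Fin M × Fin N) (Fin L × Fin M × Fin N) ℂ :=
  1 - (μ : ℂ) • ((1 : Matrix (Fin L) (Fin L) ℂ) ⊗ₖ (cmplx Q ⊗ₖ A)) - EH L M N

/-- The approximative block Jacobi preconditioner `P̂(μ) = I − μ (I_L ⊗ Q_Δ ⊗ A)`. -/
def Phat (L : ℕ) {M N : ℕ} (QΔ : Matrix (Fin M) (Fin M) ℝ) (A : Matrix (Fin N) (Fin N) ℂ)
    (μ : ℝ) : Matrix (Fin L × Fin M × Fin N) (Fin L × Fin M × Fin N) ℂ :=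
  1 - (μ : ℂ) • ((1 : Matrix (Fin L) (Fin L) ℂ) ⊗ₖ (cmplx QΔ ⊗ₖ A))

/-- The smoother iteration matrix `T_S(μ) = I − P̂(μ)⁻¹ C(μ)`. -/
def Tsmooth (L : ℕ) {M N : ℕ} (Q QΔ : Matrix (Fin M) (Fin M) ℝ)
    (A : Matrix (Fin N) (Fin N) ℂ) (μ : ℝ) :
    Matrix (Fin L × Fin M × Fin N) (Fin L × Fin M × Fin N) ℂ :=
  1 - (Phat L QΔ A μ)⁻¹ * Cmat L Q A μ

attribute [local instance] Matrix.linftyOpNormedRing Matrix.linftyOpNormedAlgebra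

/-- Kronecker products commute with powers. -/
lemma kron_pow' {l m : Type*} [Fintype l] [Fintype m] [DecidableEq l] [DecidableEq m]
    (P : Matrix l l ℂ) (Q : Matrix m m ℂ) (n : ℕ) :
    (P ⊗ₖ Q) ^ n = (P ^ n) ⊗ₖ (Q ^ n) := by
  induction n with
  | zero => simp [Matrix.one_kronecker_one]
  | succ n ih => rw [pow_succ, pow_succ, pow_succ, ih, Matrix.mul_kronecker_mul]

lemma neg_kronecker' {l m n p : Type*} (A : Matrix l m ℂ) (B : Matrix n p ℂ) :
    (-A) ⊗ₖ B = -(A ⊗ₖ B) := by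
  ext ⟨i, j⟩ ⟨a, b⟩
  simp [Matrix.kronecker_apply]

lemma kronecker_neg' {l m n p : Type*} (A : Matrix l m ℂ) (B : Matrix n p ℂ) :
    A ⊗ₖ (-B) = -(A ⊗ₖ B) := by
  ext ⟨i, j⟩ ⟨a, b⟩
  simp [Matrix.kronecker_apply]

lemma cmplx_eq {n : Type*} [Fintype n] [DecidableEq n] (A : Matrix n n ℝ) :
    cmplx A = Complex.ofRealHom.mapMatrix A := rfl

/-- Perturbation of a power in a normed ring. -/
lemma pow_perturb_bound' {R : Type*} [NormedRing R] [NormOneClass R] (S T : R) (n : ℕ) :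
    ‖(S + T) ^ n - S ^ n‖ ≤ n * ‖T‖ * (‖S‖ + ‖T‖ + 1) ^ n := by
  induction n with
  | zero => simp
  | succ n ih =>
    have key : (S + T) ^ (n + 1) - S ^ (n + 1)
        = (S + T) * ((S + T) ^ n - S ^ n) + T * S ^ n := by
      rw [pow_succ' (S + T), pow_succ' S]; noncomm_ring
    have h1 : ‖(S + T) ^ (n + 1) - S ^ (n + 1)‖
        ≤ ‖S + T‖ * ‖(S + T) ^ n - S ^ n‖ + ‖T‖ * ‖S ^ n‖ := by
      rw [key]
      exact (norm_add_le _ _).trans (add_le_add (norm_mul_le _ _) (norm_mul_le _ _))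
    set a := ‖S‖; set b := ‖T‖
    have ha : 0 ≤ a := norm_nonneg _
    have hb : 0 ≤ b := norm_nonneg _
    set m := a + b + 1 with hm
    have hm1 : 1 ≤ m := by linarith
    have hSn : ‖S ^ n‖ ≤ m ^ n :=
      (norm_pow_le S n).trans (pow_le_pow_left₀ ha (by linarith) n)
    have hST : ‖S + T‖ ≤ m := (norm_add_le _ _).trans (by linarith)
    have hmn : (0:ℝ) ≤ m ^ n := pow_nonneg (by linarith) n
    have hmm : m ^ n ≤ m ^ (n + 1) := pow_le_pow_right₀ hm1 (Nat.le_succ n)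
    have hd : 0 ≤ ‖(S + T) ^ n - S ^ n‖ := norm_nonneg _
    calc ‖(S + T) ^ (n + 1) - S ^ (n + 1)‖
        ≤ ‖S + T‖ * ‖(S + T) ^ n - S ^ n‖ + b * ‖S ^ n‖ := h1
      _ ≤ m * (n * b * m ^ n) + b * m ^ n := by gcongr
      _ ≤ (↑(n + 1) : ℝ) * b * m ^ (n + 1) := by
          have : m * (↑n * b * m ^ n) = ↑n * b * m ^ (n+1) := by ring
          rw [this]
          have h2 : b * m ^ n ≤ b * m ^ (n+1) := by gcongr
          push_cast
          nlinarith [mul_nonneg hb hmn]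

theorem stmt_11 (L M N : ℕ) (hL : 0 < L) (hM : 0 < M) (hN : 0 < N)
    (Q QΔ : Matrix (Fin M) (Fin M) ℝ) (A : Matrix (Fin N) (Fin N) ℂ)
    (hQΔ : IsUnit QΔ) (hA : IsUnit A)
    (hnil : ((1 : Matrix (Fin M) (Fin M) ℝ) - QΔ⁻¹ * Q) ^ M = 0)
    (k : ℕ) (hk : M ≤ k) :
    ∃ c > (0 : ℝ), ∃ μs > (0 : ℝ), ∀ μ : ℝ, μs < μ →
      IsUnit (Phat L QΔ A μ) ∧
      spectralRadius ℂ ((Tsmooth L Q QΔ A μ) ^ k) ≤ ENNReal.ofReal (c / μ) := by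
  haveI : Nonempty (Fin L) := ⟨⟨0, hL⟩⟩
  haveI : Nonempty (Fin M) := ⟨⟨0, hM⟩⟩
  haveI : Nonempty (Fin N) := ⟨⟨0, hN⟩⟩
  haveI : CompleteSpace (Matrix (Fin L × Fin M × Fin N) (Fin L × Fin M × Fin N) ℂ) :=
    FiniteDimensional.complete ℂ _
  -- key matrices
  set B : Matrix (Fin L × Fin M × Fin N) (Fin L × Fin M × Fin N) ℂ :=
    (1 : Matrix (Fin L) (Fin L) ℂ) ⊗ₖ (cmplx QΔ ⊗ₖ A) with hBdef
  set D : Matrix (Fin L × Fin M × Fin N) (Fin L × Fin M × Fin N) ℂ :=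
    (1 : Matrix (Fin L) (Fin L) ℂ) ⊗ₖ ((cmplx Q - cmplx QΔ) ⊗ₖ A) with hDdef
  set S : Matrix (Fin L × Fin M × Fin N) (Fin L × Fin M × Fin N) ℂ :=
    (1 : Matrix (Fin L) (Fin L) ℂ) ⊗ₖ
      (cmplx ((1 : Matrix (Fin M) (Fin M) ℝ) - QΔ⁻¹ * Q) ⊗ₖ (1 : Matrix (Fin N) (Fin N) ℂ))
      with hSdef
  -- unit facts
  have hQΔdet : IsUnit QΔ.det := (Matrix.isUnit_iff_isUnit_det QΔ).mp hQΔ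
  have hQΔcdet : IsUnit (cmplx QΔ).det := by
    rw [cmplx_eq, ← RingHom.map_det]
    simp only [Complex.ofRealHom_eq_coe]
    exact (isUnit_iff_ne_zero).mpr (by
      exact_mod_cast Complex.ofReal_ne_zero.mpr (isUnit_iff_ne_zero.mp hQΔdet))
  have hAdet : IsUnit A.det := (Matrix.isUnit_iff_isUnit_det A).mp hA
  have hBdet : IsUnit B.det := by
    rw [hBdef, Matrix.det_kronecker, Matrix.det_kronecker, Matrix.det_one, one_pow, one_mul]
    exact ((hQΔcdet.pow _).mul (hAdet.pow _)).pow _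
  have hBinv : B * B⁻¹ = 1 := Matrix.mul_nonsing_inv _ hBdet
  -- nilpotency of S
  have hnilC : (cmplx ((1 : Matrix (Fin M) (Fin M) ℝ) - QΔ⁻¹ * Q)) ^ M = 0 := by
    rw [cmplx_eq, ← map_pow, hnil, map_zero]
  have hSM : S ^ M = 0 := by
    rw [hSdef, kron_pow', kron_pow', hnilC, one_pow, one_pow,
      Matrix.zero_kronecker, Matrix.kronecker_zero]
  have hSk : S ^ k = 0 := by
    calc S ^ k = S ^ M * S ^ (k - M) := by rw [← pow_add, Nat.add_sub_cancel' hk]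
    _ = 0 := by rw [hSM, zero_mul]
  -- B * S = -D
  have hBS : B * S = -D := by
    rw [hBdef, hSdef, hDdef, ← Matrix.mul_kronecker_mul, ← Matrix.mul_kronecker_mul]
    have h1 : cmplx QΔ * cmplx ((1 : Matrix (Fin M) (Fin M) ℝ) - QΔ⁻¹ * Q)
        = -(cmplx Q - cmplx QΔ) := by
      simp only [cmplx_eq, ← _root_.map_mul, ← _root_.map_sub, ← _root_.map_neg]
      congr 1
      rw [Matrix.mul_sub, Matrix.mul_one, Matrix.mul_nonsing_inv_cancel_left _ _ hQΔdet]
      abel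
    rw [h1]
    simp only [Matrix.mul_one, Matrix.one_mul, neg_kronecker', kronecker_neg']
  -- norms and constants
  obtain ⟨nB, hnB⟩ : ∃ x : ℝ, ‖B⁻¹‖ = x := ⟨_, rfl⟩
  obtain ⟨nS, hnS⟩ : ∃ x : ℝ, ‖S‖ = x := ⟨_, rfl⟩
  obtain ⟨nE, hnE⟩ : ∃ x : ℝ, ‖EH L M N‖ = x := ⟨_, rfl⟩
  have hnB0 : 0 ≤ nB := hnB ▸ norm_nonneg _
  have hnS0 : 0 ≤ nS := hnS ▸ norm_nonneg _
  have hnE0 : 0 ≤ nE := hnE ▸ norm_nonneg _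
  set c₁ : ℝ := 2 * nB * (nS + nE) + 1 with hc₁
  have hc₁1 : 1 ≤ c₁ := by
    have h := mul_nonneg (mul_nonneg (by norm_num : (0:ℝ) ≤ 2) hnB0) (add_nonneg hnS0 hnE0)
    linarith
  set c : ℝ := k * c₁ * (nS + 2) ^ k + 1 with hc
  have hc0 : 0 < c := by
    have h1 : (0:ℝ) ≤ (nS + 2) ^ k := pow_nonneg (by linarith) k
    have h2 : (0:ℝ) ≤ (k : ℝ) * c₁ := mul_nonneg (Nat.cast_nonneg k) (by linarith)
    have : (0:ℝ) ≤ k * c₁ * (nS + 2) ^ k := mul_nonneg h2 h1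
    linarith
  set μs : ℝ := 2 * nB + c₁ + 1 with hμs
  have hμs0 : 0 < μs := by linarith
  refine ⟨c, hc0, μs, hμs0, fun μ hμ => ?_⟩
  have hμ0 : 0 < μ := lt_trans hμs0 hμ
  have hμC : (μ : ℂ) ≠ 0 := by exact_mod_cast ne_of_gt hμ0
  have hnn : (0:ℝ) ≤ μ⁻¹ * nB := mul_nonneg (inv_nonneg.mpr hμ0.le) hnB0
  have hμCn : (-(μ : ℂ)) ≠ 0 := neg_ne_zero.mpr hμC
  -- the Neumann perturbation
  set u : Matrix (Fin L × Fin M × Fin N) (Fin L × Fin M × Fin N) ℂ :=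
    (μ : ℂ)⁻¹ • B⁻¹ with hudef
  have hunorm : ‖u‖ = μ⁻¹ * nB := by
    rw [hudef, norm_smul, hnB]
    congr 1
    simp [norm_inv, Complex.norm_real, Real.norm_eq_abs, abs_of_pos hμ0]
  have huhalf : ‖u‖ < 1 / 2 := by
    rw [hunorm]
    have h2 : nB < μ / 2 := by rw [hμs] at hμ; linarith
    have h3 : μ⁻¹ * nB < μ⁻¹ * (μ / 2) := mul_lt_mul_of_pos_left h2 (inv_pos.mpr hμ0)
    have h4 : μ⁻¹ * (μ / 2) = 1 / 2 := by field_simp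
    linarith
  have hu1 : ‖u‖ < 1 := huhalf.trans (by norm_num)
  -- factor P̂ = (-μ • B) * (1 - u)
  have hPdef : Phat L QΔ A μ = 1 - (μ : ℂ) • B := rfl
  have hBu : B * u = (μ : ℂ)⁻¹ • (1 : Matrix (Fin L × Fin M × Fin N) (Fin L × Fin M × Fin N) ℂ) := by
    rw [hudef, Matrix.mul_smul, hBinv]
  have hfac : Phat L QΔ A μ = ((-(μ : ℂ)) • B) * (1 - u) := by
    have hscalar : (-(μ : ℂ)) * (μ : ℂ)⁻¹ = -1 := by field_simp
    rw [hPdef, Matrix.smul_mul, mul_sub, mul_one, hBu, smul_sub, smul_smul, hscalar]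
    module
  have hsmulBdet : IsUnit ((-(μ : ℂ)) • B).det := by
    rw [Matrix.det_smul]
    exact ((isUnit_iff_ne_zero.mpr hμCn).pow _).mul hBdet
  have huunit : IsUnit ((1 : Matrix (Fin L × Fin M × Fin N) (Fin L × Fin M × Fin N) ℂ) - u) :=
    isUnit_one_sub_of_norm_lt_one hu1
  have hPunit : IsUnit (Phat L QΔ A μ) := by
    rw [hfac]
    exact ((Matrix.isUnit_iff_isUnit_det _).mpr hsmulBdet).mul huunit
  refine ⟨hPunit, ?_⟩
  have hPdet : IsUnit (Phat L QΔ A μ).det := (Matrix.isUnit_iff_isUnit_det _).mp hPunit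
  have hudet : IsUnit ((1 : Matrix (Fin L × Fin M × Fin N) (Fin L × Fin M × Fin N) ℂ) - u).det :=
    (Matrix.isUnit_iff_isUnit_det _).mp huunit
  set v := ((1 : Matrix (Fin L × Fin M × Fin N) (Fin L × Fin M × Fin N) ℂ) - u)⁻¹ with hvdef
  have hv1 : ((1 : Matrix (Fin L × Fin M × Fin N) (Fin L × Fin M × Fin N) ℂ) - u) * v = 1 :=
    Matrix.mul_nonsing_inv _ hudet
  have hv2 : v * ((1 : Matrix (Fin L × Fin M × Fin N) (Fin L × Fin M × Fin N) ℂ) - u) = 1 :=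
    Matrix.nonsing_inv_mul _ hudet
  have hveq : v = 1 + v * u := by
    have : v * ((1 - u) + u) = v := by rw [sub_add_cancel, mul_one]
    rw [mul_add, hv2] at this
    linear_combination (norm := abel) -this
  have hvnorm : ‖v‖ ≤ 2 := by
    have h1 : ‖v‖ ≤ 1 + ‖v‖ * ‖u‖ := by
      calc ‖v‖ = ‖1 + v * u‖ := by rw [← hveq]
      _ ≤ ‖(1 : Matrix (Fin L × Fin M × Fin N) (Fin L × Fin M × Fin N) ℂ)‖ + ‖v * u‖ :=
          norm_add_le _ _
      _ ≤ 1 + ‖v‖ * ‖u‖ := by rw [norm_one]; gcongr; exact norm_mul_le _ _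
    have h2 : ‖v‖ * ‖u‖ ≤ ‖v‖ * (1/2) :=
      mul_le_mul_of_nonneg_left huhalf.le (norm_nonneg v)
    linarith
  -- inverse of P̂
  have hPinv : (Phat L QΔ A μ)⁻¹ = v * ((-(μ : ℂ))⁻¹ • B⁻¹) := by
    apply Matrix.inv_eq_right_inv
    rw [hfac, mul_assoc, ← mul_assoc (1 - u), hv1, one_mul, Matrix.smul_mul,
      Matrix.mul_smul, hBinv, smul_smul, mul_inv_cancel₀ hμCn, one_smul]
  have hnegμnorm : ‖(-(μ : ℂ))⁻¹‖ = μ⁻¹ := by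
    simp [norm_inv, norm_neg, Complex.norm_real, Real.norm_eq_abs, abs_of_pos hμ0]
  have hPinvnorm : ‖(Phat L QΔ A μ)⁻¹‖ ≤ 2 * (μ⁻¹ * nB) := by
    rw [hPinv]
    calc ‖v * ((-(μ : ℂ))⁻¹ • B⁻¹)‖ ≤ ‖v‖ * ‖(-(μ : ℂ))⁻¹ • B⁻¹‖ := norm_mul_le _ _
    _ = ‖v‖ * (μ⁻¹ * nB) := by rw [norm_smul, hnegμnorm, hnB]
    _ ≤ 2 * (μ⁻¹ * nB) := mul_le_mul_of_nonneg_right hvnorm hnn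
  -- C = P̂ - μD - EH
  have hQsplit : (1 : Matrix (Fin L) (Fin L) ℂ) ⊗ₖ (cmplx Q ⊗ₖ A) = B + D := by
    rw [hBdef, hDdef, ← Matrix.kronecker_add, ← Matrix.add_kronecker, add_sub_cancel]
  have hCeq : Cmat L Q A μ = Phat L QΔ A μ - (μ : ℂ) • D - EH L M N := by
    rw [Cmat, hQsplit, hPdef, smul_add]
    abel
  -- T = S + Rm
  set Rm := (v - 1) * S + (Phat L QΔ A μ)⁻¹ * EH L M N with hRmdef
  have hBinvD : B⁻¹ * D = -S := by
    have : B⁻¹ * (B * S) = S := Matrix.nonsing_inv_mul_cancel_left _ _ hBdet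
    rw [hBS] at this
    rw [← neg_neg D, Matrix.mul_neg, this]
  have hinner : ((-(μ : ℂ))⁻¹ • B⁻¹) * ((μ : ℂ) • D) = S := by
    rw [Matrix.smul_mul, Matrix.mul_smul, hBinvD, smul_smul]
    have hsc : (-(μ : ℂ))⁻¹ * (μ : ℂ) = -1 := by field_simp
    rw [hsc]
    simp
  have hPinvD : (Phat L QΔ A μ)⁻¹ * ((μ : ℂ) • D) = v * S := by
    rw [hPinv, mul_assoc, hinner]
  have hTeq : Tsmooth L Q QΔ A μ = S + Rm := by
    rw [Tsmooth, hCeq, mul_sub, mul_sub, Matrix.nonsing_inv_mul _ hPdet, hPinvD, hRmdef,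
      Matrix.sub_mul, one_mul]
    abel
  -- norm of Rm
  have hvu : ‖v - 1‖ ≤ 2 * (μ⁻¹ * nB) := by
    have hvmu : v - 1 = v * u := by
      conv_lhs => rw [hveq]
      abel
    rw [hvmu]
    calc ‖v * u‖ ≤ ‖v‖ * ‖u‖ := norm_mul_le _ _
    _ ≤ 2 * (μ⁻¹ * nB) := by rw [hunorm]; exact mul_le_mul_of_nonneg_right hvnorm hnn
  have hRmnorm : ‖Rm‖ ≤ (c₁ - 1) / μ := by
    have h1 : ‖Rm‖ ≤ ‖v - 1‖ * nS + ‖(Phat L QΔ A μ)⁻¹‖ * nE := by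
      rw [hRmdef, ← hnS, ← hnE]
      exact (norm_add_le _ _).trans (add_le_add (norm_mul_le _ _) (norm_mul_le _ _))
    have h2 : ‖v - 1‖ * nS ≤ 2 * (μ⁻¹ * nB) * nS := mul_le_mul_of_nonneg_right hvu hnS0
    have h3 : ‖(Phat L QΔ A μ)⁻¹‖ * nE ≤ 2 * (μ⁻¹ * nB) * nE :=
      mul_le_mul_of_nonneg_right hPinvnorm hnE0
    have h4 : 2 * (μ⁻¹ * nB) * nS + 2 * (μ⁻¹ * nB) * nE = (c₁ - 1) / μ := by
      rw [hc₁]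
      field_simp
      ring
    linarith
  have hμc₁ : c₁ < μ := by rw [hμs] at hμ; linarith
  have hRm1 : ‖Rm‖ ≤ 1 := by
    have : (c₁ - 1) / μ ≤ 1 := by
      rw [div_le_one hμ0]; linarith
    linarith [hRmnorm]
  have hRmc₁ : ‖Rm‖ ≤ c₁ / μ := by
    have : (c₁ - 1) / μ ≤ c₁ / μ := by
      apply div_le_div_of_nonneg_right ?_ hμ0.le |>.trans_eq rfl
      linarith
    linarith [hRmnorm]
  -- final norm bound
  have hTk : ‖(Tsmooth L Q QΔ A μ) ^ k‖ ≤ c / μ := by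
    have h0 : ‖(S + Rm) ^ k - S ^ k‖ ≤ k * ‖Rm‖ * (‖S‖ + ‖Rm‖ + 1) ^ k :=
      pow_perturb_bound' S Rm k
    rw [hSk, sub_zero] at h0
    have hm0 : (0:ℝ) ≤ ‖S‖ + ‖Rm‖ + 1 := by
      have := norm_nonneg S; have := norm_nonneg Rm; linarith
    have h1 : (‖S‖ + ‖Rm‖ + 1 : ℝ) ^ k ≤ (nS + 2) ^ k := by
      apply pow_le_pow_left₀ hm0
      rw [hnS] at *
      linarith [hRm1]
    have hq0 : (0:ℝ) ≤ (k : ℝ) * (c₁ / μ) :=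
      mul_nonneg (Nat.cast_nonneg k) (div_nonneg (by linarith) hμ0.le)
    have h2 : (k : ℝ) * ‖Rm‖ * (‖S‖ + ‖Rm‖ + 1) ^ k ≤ k * (c₁ / μ) * (nS + 2) ^ k :=
      mul_le_mul (mul_le_mul_of_nonneg_left hRmc₁ (Nat.cast_nonneg k)) h1
        (pow_nonneg hm0 k) hq0
    have h3 : (k : ℝ) * (c₁ / μ) * (nS + 2) ^ k = (k * c₁ * (nS + 2) ^ k) / μ := by ring
    have h4 : (k * c₁ * (nS + 2) ^ k) / μ ≤ c / μ := by
      rw [hc]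
      apply div_le_div_of_nonneg_right ?_ hμ0.le |>.trans_eq rfl
      linarith
    rw [hTeq]
    linarith
  -- spectral radius
  calc spectralRadius ℂ ((Tsmooth L Q QΔ A μ) ^ k)
      ≤ ‖(Tsmooth L Q QΔ A μ) ^ k‖₊ := spectrum.spectralRadius_le_nnnorm (𝕜 := ℂ) _
  _ = ENNReal.ofReal ‖(Tsmooth L Q QΔ A μ) ^ k‖ := (ENNReal.ofReal_eq_coe_nnreal (norm_nonneg _)).symm
  _ ≤ ENNReal.ofReal (c / μ) := ENNReal.ofReal_le_ofReal hTk
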